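/- Let 𝓛 be a continuous nest on a complex separable Hilbert space H, let T be a finite rank bounded operator on H, let M₀ ∈ 𝓛, and let P ∈ 𝓛 be such that φ_T(M₀) ⊊ P and P ⊆ φ_T(M) for every M ∈ 𝓛 with φ_T(M₀) ⊊ φ_T(M). Then there exists x ∈ H such that M̂_x = φ_T(M₀), M_x = P and M_{Tx} = σ_T(Ψ_T(M₀)). -/

import Mathlib

open scoped InnerProductSpace

variable {H : Type*} [NormedAddCommGroup H] [InnerProductSpace ℂ H]
  [CompleteSpace H] [TopologicalSpace.SeparableSpace H]

/-- A subspace lattice on `H`: a set of closed subspaces containing `⊥` and `⊤`,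
closed under arbitrary intersections and closed linear spans. -/
def IsSubspaceLattice (𝓛 : Set (Submodule ℂ H)) : Prop :=
  (∀ M ∈ 𝓛, IsClosed (M : Set H)) ∧ ⊥ ∈ 𝓛 ∧ ⊤ ∈ 𝓛 ∧
  (∀ S ⊆ 𝓛, sInf S ∈ 𝓛) ∧ (∀ S ⊆ 𝓛, (sSup S).topologicalClosure ∈ 𝓛)

/-- A nest: a totally ordered subspace lattice. -/
def IsNest (𝓛 : Set (Submodule ℂ H)) : Prop :=
  IsSubspaceLattice 𝓛 ∧ ∀ M ∈ 𝓛, ∀ N ∈ 𝓛, M ≤ N ∨ N ≤ M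

/-- A continuous nest. -/
def IsContinuousNest (𝓛 : Set (Submodule ℂ H)) : Prop :=
  IsNest 𝓛 ∧ ∀ M ∈ 𝓛, M = (sSup {N ∈ 𝓛 | N < M}).topologicalClosure

/-- `M_x`: the intersection of all members of `𝓛` containing `x`. -/
noncomputable def Mx (𝓛 : Set (Submodule ℂ H)) (x : H) : Submodule ℂ H :=
  sInf {M ∈ 𝓛 | x ∈ M}

/-- `M̂_x`: the closed span of all members of `𝓛` orthogonal to `x`. -/
noncomputable def Mhat (𝓛 : Set (Submodule ℂ H)) (x : H) : Submodule ℂ H :=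
  (sSup {M ∈ 𝓛 | ∀ v ∈ M, inner ℂ x v = (0 : ℂ)}).topologicalClosure

/-- `φ_T(M)`: the closed span of all members `M'` of `𝓛` with `T(M') ⊆ M`. -/
noncomputable def phiT (𝓛 : Set (Submodule ℂ H)) (T : H →L[ℂ] H) (M : Submodule ℂ H) :
    Submodule ℂ H :=
  (sSup {M' ∈ 𝓛 | ∀ v ∈ M', T v ∈ M}).topologicalClosure

/-- `Ψ_T(M)`: the intersection of all `M' ∈ 𝓛` with `φ_T(M') = φ_T(M)`. -/
noncomputable def PsiT (𝓛 : Set (Submodule ℂ H)) (T : H →L[ℂ] H) (M : Submodule ℂ H) :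
    Submodule ℂ H :=
  sInf {M' ∈ 𝓛 | phiT 𝓛 T M' = phiT 𝓛 T M}

/-- `σ_T(M)`: the closed span of all `M' ∈ 𝓛` with `φ_T(M') = φ_T(M)`. -/
noncomputable def sigmaT (𝓛 : Set (Submodule ℂ H)) (T : H →L[ℂ] H) (M : Submodule ℂ H) :
    Submodule ℂ H :=
  (sSup {M' ∈ 𝓛 | phiT 𝓛 T M' = phiT 𝓛 T M}).topologicalClosure

/-- The kernel map `ω_T`. -/
noncomputable def omegaT (𝓛 : Set (Submodule ℂ H)) (T : H →L[ℂ] H) (M : Submodule ℂ H) :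
    Submodule ℂ H × Submodule ℂ H :=
  (phiT 𝓛 T M, PsiT 𝓛 T M)

/-- The rank-one operator `x ⊗ y : z ↦ ⟨z, y⟩ x`. -/
noncomputable def rankOne (x y : H) : H →L[ℂ] H :=
  (innerSL ℂ y).smulRight x

/-- The nest algebra of a subspace lattice. -/
def nestAlg (𝓛 : Set (Submodule ℂ H)) : Set (H →L[ℂ] H) :=
  {T | ∀ M ∈ 𝓛, ∀ v ∈ M, T v ∈ M}

/-- Lie module over the nest algebra. -/
def IsLieModule (𝓛 : Set (Submodule ℂ H)) (𝓜 : Submodule ℂ (H →L[ℂ] H)) : Prop :=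
  ∀ A ∈ 𝓜, ∀ T ∈ nestAlg 𝓛, A.comp T - T.comp A ∈ 𝓜

/-- Orthogonal projection of a vector onto a closed subspace (junk value `0` if not closed). -/
noncomputable def projVec (N : Submodule ℂ H) (z : H) : H := by
  classical
  exact if h : IsClosed (N : Set H) then
    have : CompleteSpace N := h.completeSpace_coe
    (N.orthogonalProjectionOnto z : H)
  else 0

set_option linter.unusedSectionVars false
set_option linter.unusedVariables false

section Helpers

variable (𝓛 : Set (Submodule ℂ H)) (T : H →L[ℂ] H)

/-- any subset of a nest is directed -/
lemma nest_directedOn (h : IsNest 𝓛) {s : Set (Submodule ℂ H)} (hs : s ⊆ 𝓛) :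
    DirectedOn (· ≤ ·) s := by
  intro a ha b hb
  rcases h.2 a (hs ha) b (hs hb) with hab | hba
  · exact ⟨b, hb, hab, le_rfl⟩
  · exact ⟨a, ha, le_rfl, hba⟩

lemma phiT_mem (h : IsNest 𝓛) (M : Submodule ℂ H) : phiT 𝓛 T M ∈ 𝓛 :=
  h.1.2.2.2.2 _ (fun _ hM' => hM'.1)

/-- `T` maps `φ_T(M)` into `M` when `M` is closed. -/
lemma phiT_maps (h : IsNest 𝓛) {M : Submodule ℂ H} (hM : IsClosed (M : Set H)) :
    ∀ v ∈ phiT 𝓛 T M, T v ∈ M := by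
  intro v hv
  set s : Set (Submodule ℂ H) := {M' ∈ 𝓛 | ∀ v ∈ M', T v ∈ M} with hs
  have hsub : s ⊆ 𝓛 := fun _ hM' => hM'.1
  have hbot : (⊥ : Submodule ℂ H) ∈ s := ⟨h.1.2.1, by simp⟩
  have hne : s.Nonempty := ⟨⊥, hbot⟩
  have hsup : ((sSup s : Submodule ℂ H) : Set H) ⊆ T ⁻¹' (M : Set H) := by
    intro z hz
    rcases (Submodule.mem_sSup_of_directed hne (nest_directedOn 𝓛 h hsub)).mp hz with
      ⟨y, hy, hzy⟩
    exact hy.2 z hzy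
  have hcl : closure ((sSup s : Submodule ℂ H) : Set H) ⊆ T ⁻¹' (M : Set H) :=
    closure_minimal hsup (hM.preimage T.continuous)
  exact hcl (by rw [← Submodule.topologicalClosure_coe]; exact hv)

lemma le_phiT (h : IsNest 𝓛) {W M : Submodule ℂ H} (hW : W ∈ 𝓛)
    (him : ∀ v ∈ W, T v ∈ M) : W ≤ phiT 𝓛 T M :=
  le_trans (le_sSup (by exact ⟨hW, him⟩)) (Submodule.le_topologicalClosure _)

lemma phiT_mono {M M' : Submodule ℂ H} (h : M ≤ M') : phiT 𝓛 T M ≤ phiT 𝓛 T M' := by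
  apply Submodule.topologicalClosure_mono
  apply sSup_le_sSup
  intro W hW
  exact ⟨hW.1, fun v hv => h (hW.2 v hv)⟩

/-- In a continuous nest, `inf` of everything strictly above `Q` is `Q`. -/
lemma inf_gt_eq (h : IsContinuousNest 𝓛) {Q : Submodule ℂ H} (hQ : Q ∈ 𝓛) (hQt : Q ≠ ⊤) :
    sInf {M ∈ 𝓛 | Q < M} = Q := by
  set L := sInf {M ∈ 𝓛 | Q < M} with hL
  have hLmem : L ∈ 𝓛 := h.1.1.2.2.2.1 _ (fun _ hM => hM.1)
  have hQL : Q ≤ L := le_sInf (fun M hM => hM.2.le)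
  rcases eq_or_lt_of_le hQL with heq | hlt
  · exact heq.symm
  · exfalso
    have hLc : L = (sSup {N ∈ 𝓛 | N < L}).topologicalClosure := h.2 L hLmem
    have hsub : sSup {N ∈ 𝓛 | N < L} ≤ Q := by
      apply sSup_le
      intro N hN
      by_contra hc
      have hQN : Q < N := by
        rcases h.1.2 N hN.1 Q hQ with h1 | h2
        · exact absurd h1 hc
        · exact lt_of_le_of_ne h2 (fun he => hc (le_of_eq he.symm))
      have hle : L ≤ N := sInf_le ⟨hN.1, hQN⟩
      exact hN.2.not_ge hle
    have : L ≤ Q := hLc ▸ Submodule.topologicalClosure_minimal _ hsub (h.1.1.1 Q hQ)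
    exact hlt.not_ge this

end Helpers

section Families

variable (𝓛 : Set (Submodule ℂ H))

/-- Countable cofinal family below `Q` in a continuous nest. -/
lemma cofinal_family (h : IsContinuousNest 𝓛) {Q : Submodule ℂ H} (hQ : Q ∈ 𝓛) :
    ∃ f : ℕ → Submodule ℂ H, (∀ n, f n ∈ 𝓛) ∧
      ∀ M ∈ 𝓛, M < Q → ∃ n, M ≤ f n ∧ f n < Q := by
  classical
  have hne : Nonempty H := ⟨0⟩
  obtain ⟨u, hu⟩ : ∃ u : ℕ → H, DenseRange u :=
    ⟨TopologicalSpace.denseSeq H, TopologicalSpace.denseRange_denseSeq H⟩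
  set g : ℕ × ℚ → Submodule ℂ H := fun p =>
    if hex : ∃ M, (M ∈ 𝓛 ∧ M < Q) ∧ Metric.infDist (u p.1) M < (p.2 : ℝ) then
      hex.choose else ⊥ with hg
  refine ⟨fun n => g ((Denumerable.eqv (ℕ × ℚ)).symm n), ?_, ?_⟩
  · intro n
    set p := (Denumerable.eqv (ℕ × ℚ)).symm n
    by_cases hex : ∃ M, (M ∈ 𝓛 ∧ M < Q) ∧ Metric.infDist (u p.1) M < (p.2 : ℝ)
    · simp only [hg]; split_ifs with h'; exacts [h'.choose_spec.1.1, hex.choose_spec.1.1]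
    · simp only [hg]; split_ifs with h'; exacts [h'.choose_spec.1.1, h.1.1.2.1]
  · intro M hM hMQ
    obtain ⟨v, hvQ, hvM⟩ : ∃ v, v ∈ Q ∧ v ∉ M := by
      rcases SetLike.exists_of_lt hMQ with ⟨v, hv1, hv2⟩; exact ⟨v, hv1, hv2⟩
    have hMclosed : IsClosed (M : Set H) := h.1.1.1 M hM
    have hMne : ((M : Set H)).Nonempty := ⟨0, M.zero_mem⟩
    set d := Metric.infDist v (M : Set H) with hd
    have hdpos : 0 < d := (hMclosed.notMem_iff_infDist_pos hMne).mp hvM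
    obtain ⟨k, hk⟩ := hu.exists_dist_lt v (by positivity : (0:ℝ) < d / 3)
    have hukM : 2 * d / 3 ≤ Metric.infDist (u k) (M : Set H) := by
      have h1 : Metric.infDist v (M : Set H) ≤
          Metric.infDist (u k) (M : Set H) + dist v (u k) :=
        Metric.infDist_le_infDist_add_dist
      have h2 : dist v (u k) < d / 3 := hk
      linarith [h1, h2]
    have hukQ : Metric.infDist (u k) (Q : Set H) < d / 3 := by
      have := Metric.infDist_le_dist_of_mem (x := u k) hvQ
      calc Metric.infDist (u k) (Q : Set H) ≤ dist (u k) v := this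
        _ = dist v (u k) := dist_comm _ _
        _ < d / 3 := hk
    obtain ⟨q, hq1, hq2⟩ := exists_rat_btwn
      (lt_of_lt_of_le hukQ (by linarith : d / 3 ≤ 2 * d / 3))
    -- q strictly between infDist (u k) Q and 2d/3
    have hq1' : Metric.infDist (u k) (Q : Set H) < (q:ℝ) := hq1
    have hex : ∃ M', (M' ∈ 𝓛 ∧ M' < Q) ∧ Metric.infDist (u k) M' < (q : ℝ) := by
      set s : Set (Submodule ℂ H) := {N ∈ 𝓛 | N < Q} with hs
      have hsub : s ⊆ 𝓛 := fun _ hN => hN.1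
      have hsne : s.Nonempty := ⟨M, hM, hMQ⟩
      have hQeq : Q = (sSup s).topologicalClosure := h.2 Q hQ
      have hdisteq : Metric.infDist (u k) ((sSup s : Submodule ℂ H) : Set H)
          = Metric.infDist (u k) (Q : Set H) := by
        rw [hQeq, Submodule.topologicalClosure_coe, Metric.infDist_closure]
      have hlt : Metric.infDist (u k) ((sSup s : Submodule ℂ H) : Set H) < (q:ℝ) := by
        rw [hdisteq]; exact hq1'
      have hssne : ((sSup s : Submodule ℂ H) : Set H).Nonempty := ⟨0, Submodule.zero_mem _⟩
      obtain ⟨w, hw, hwd⟩ := (Metric.infDist_lt_iff hssne).mp hlt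
      obtain ⟨M', hM's, hwM'⟩ :=
        (Submodule.mem_sSup_of_directed hsne (nest_directedOn 𝓛 h.1 hsub)).mp hw
      refine ⟨M', ⟨hM's.1, hM's.2⟩, ?_⟩
      exact lt_of_le_of_lt (Metric.infDist_le_dist_of_mem hwM') hwd
    obtain ⟨n, hn⟩ : ∃ n, (Denumerable.eqv (ℕ × ℚ)).symm n = (k, q) :=
      ⟨Denumerable.eqv (ℕ × ℚ) (k, q), Equiv.symm_apply_apply _ _⟩
    refine ⟨n, ?_⟩
    simp only [hn]
    have hgd : g (k, q) = hex.choose := by simp only [hg, dif_pos hex]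
    obtain ⟨⟨hc1, hc2⟩, hc3⟩ := hex.choose_spec
    rw [hgd]
    constructor
    · -- M ≤ choose
      by_contra hcon
      have : hex.choose ≤ M := by
        rcases h.1.2 _ hc1 M hM with h1 | h2
        · exact h1
        · exact absurd h2 hcon
      have hmono : Metric.infDist (u k) (M : Set H) ≤
          Metric.infDist (u k) (hex.choose : Set H) :=
        Metric.infDist_le_infDist_of_subset this ⟨0, Submodule.zero_mem _⟩
      have : Metric.infDist (u k) (M : Set H) < 2 * d / 3 :=
        lt_of_le_of_lt hmono (lt_of_lt_of_le hc3 hq2.le)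
      exact absurd hukM (not_le.mpr this)
    · exact hc2

/-- Countable coinitial family above `N` in a continuous nest. -/
lemma coinitial_family (h : IsContinuousNest 𝓛) {N : Submodule ℂ H} (hN : N ∈ 𝓛)
    (hNtop : N ≠ ⊤) :
    ∃ f : ℕ → Submodule ℂ H, (∀ n, f n ∈ 𝓛) ∧
      ∀ M ∈ 𝓛, N < M → ∃ n, N < f n ∧ f n ≤ M := by
  classical
  obtain ⟨u, hu⟩ : ∃ u : ℕ → H, DenseRange u :=
    ⟨TopologicalSpace.denseSeq H, TopologicalSpace.denseRange_denseSeq H⟩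
  set s : Set (Submodule ℂ H) := {M ∈ 𝓛 | N < M} with hs
  have hsub : s ⊆ 𝓛 := fun _ hM => hM.1
  have hsne : s.Nonempty := ⟨⊤, h.1.1.2.2.1, lt_of_le_of_ne le_top hNtop⟩
  have hinfs : sInf s = N := inf_gt_eq 𝓛 h hN hNtop
  have hclosed : ∀ M ∈ 𝓛, IsClosed (M : Set H) := h.1.1.1
  -- K := sup of orthogonal complements
  set K : Submodule ℂ H := sSup ((fun M => Mᗮ) '' s) with hK
  have hKorth : Kᗮ = N := by
    have h1 : Kᗮ = sInf s := by
      apply le_antisymm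
      · intro x hx
        rw [Submodule.mem_sInf]
        intro M hMs
        haveI : CompleteSpace M := (hclosed M (hsub hMs)).completeSpace_coe
        rw [← M.orthogonal_orthogonal]
        rw [Submodule.mem_orthogonal]
        intro uu huu
        exact hx uu ((le_sSup (Set.mem_image_of_mem (fun W : Submodule ℂ H => Wᗮ) hMs)) huu)
      · intro x hx
        rw [Submodule.mem_orthogonal]
        intro w hw
        have hdir : DirectedOn (· ≤ ·) ((fun M : Submodule ℂ H => Mᗮ) '' s) := by
          rintro _ ⟨A, hA, rfl⟩ _ ⟨B, hB, rfl⟩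
          rcases h.1.2 A (hsub hA) B (hsub hB) with hab | hba
          · exact ⟨Aᗮ, Set.mem_image_of_mem _ hA, le_rfl, Submodule.orthogonal_le hab⟩
          · exact ⟨Bᗮ, Set.mem_image_of_mem _ hB, Submodule.orthogonal_le hba, le_rfl⟩
        have hneim : ((fun M : Submodule ℂ H => Mᗮ) '' s).Nonempty := hsne.image _
        obtain ⟨_, ⟨A, hAs, rfl⟩, hwA⟩ :=
          (Submodule.mem_sSup_of_directed hneim hdir).mp hw
        have hxA : x ∈ A := (Submodule.mem_sInf.mp hx) A hAs
        have := (Submodule.mem_orthogonal _ _).mp hwA x hxA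
        rwa [← inner_eq_zero_symm] at this
    rw [h1, hinfs]
  have hKcl : (Nᗮ : Set H) = closure (K : Set H) := by
    have : Kᗮᗮ = K.topologicalClosure := K.orthogonal_orthogonal_eq_closure
    rw [hKorth] at this
    rw [this, Submodule.topologicalClosure_coe]
  set g : ℕ × ℚ → Submodule ℂ H := fun p =>
    if hex : ∃ M, (M ∈ s) ∧ Metric.infDist (u p.1) (Mᗮ : Set H) < (p.2 : ℝ) then
      hex.choose else ⊤ with hg
  refine ⟨fun n => g ((Denumerable.eqv (ℕ × ℚ)).symm n), ?_, ?_⟩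
  · intro n
    set p := (Denumerable.eqv (ℕ × ℚ)).symm n
    by_cases hex : ∃ M, (M ∈ s) ∧ Metric.infDist (u p.1) (Mᗮ : Set H) < (p.2 : ℝ)
    · simp only [hg]; split_ifs with h'; exacts [h'.choose_spec.1.1, hex.choose_spec.1.1]
    · simp only [hg]; split_ifs with h'; exacts [h'.choose_spec.1.1, h.1.1.2.2.1]
  · intro M hM hNM
    haveI : CompleteSpace M := (hclosed M hM).completeSpace_coe
    haveI : CompleteSpace N := (hclosed N hN).completeSpace_coe
    obtain ⟨v, hvN, hvM⟩ : ∃ v, v ∈ Nᗮ ∧ v ∉ Mᗮ := by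
      by_contra hc
      push_neg at hc
      have : Nᗮ ≤ Mᗮ := fun y hy => hc y hy
      have hMN : M ≤ N := by
        calc M = Mᗮᗮ := M.orthogonal_orthogonal.symm
          _ ≤ Nᗮᗮ := Submodule.orthogonal_le this
          _ = N := N.orthogonal_orthogonal
      exact hNM.not_ge hMN
    have hMoc : IsClosed ((Mᗮ : Submodule ℂ H) : Set H) := Submodule.isClosed_orthogonal M
    have hMone : ((Mᗮ : Submodule ℂ H) : Set H).Nonempty := ⟨0, Submodule.zero_mem _⟩
    set d := Metric.infDist v ((Mᗮ : Submodule ℂ H) : Set H) with hd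
    have hdpos : 0 < d := (hMoc.notMem_iff_infDist_pos hMone).mp hvM
    obtain ⟨k, hk⟩ := hu.exists_dist_lt v (by positivity : (0:ℝ) < d / 3)
    have hukM : 2 * d / 3 ≤ Metric.infDist (u k) ((Mᗮ : Submodule ℂ H) : Set H) := by
      have h1 := Metric.infDist_le_infDist_add_dist
        (x := v) (y := u k) (s := ((Mᗮ : Submodule ℂ H) : Set H))
      have h2 : dist v (u k) < d / 3 := hk
      linarith [h1, h2]
    have hukN : Metric.infDist (u k) ((Nᗮ : Submodule ℂ H) : Set H) < d / 3 := by
      calc Metric.infDist (u k) ((Nᗮ : Submodule ℂ H) : Set H)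
          ≤ dist (u k) v := Metric.infDist_le_dist_of_mem hvN
        _ = dist v (u k) := dist_comm _ _
        _ < d / 3 := hk
    obtain ⟨q, hq1, hq2⟩ := exists_rat_btwn
      (lt_of_lt_of_le hukN (by linarith : d / 3 ≤ 2 * d / 3))
    have hex : ∃ A, (A ∈ s) ∧ Metric.infDist (u k) ((Aᗮ : Submodule ℂ H) : Set H) < (q : ℝ) := by
      have hdisteq : Metric.infDist (u k) (K : Set H)
          = Metric.infDist (u k) ((Nᗮ : Submodule ℂ H) : Set H) := by
        rw [hKcl, Metric.infDist_closure]
      have hlt : Metric.infDist (u k) (K : Set H) < (q:ℝ) := by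
        rw [hdisteq]; exact hq1
      have hKne : ((K : Submodule ℂ H) : Set H).Nonempty := ⟨0, Submodule.zero_mem _⟩
      obtain ⟨w, hw, hwd⟩ := (Metric.infDist_lt_iff hKne).mp hlt
      have hdir : DirectedOn (· ≤ ·) ((fun M : Submodule ℂ H => Mᗮ) '' s) := by
        rintro _ ⟨A, hA, rfl⟩ _ ⟨B, hB, rfl⟩
        rcases h.1.2 A (hsub hA) B (hsub hB) with hab | hba
        · exact ⟨Aᗮ, Set.mem_image_of_mem _ hA, le_rfl, Submodule.orthogonal_le hab⟩
        · exact ⟨Bᗮ, Set.mem_image_of_mem _ hB, Submodule.orthogonal_le hba, le_rfl⟩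
      obtain ⟨_, ⟨A, hAs, rfl⟩, hwA⟩ :=
        (Submodule.mem_sSup_of_directed (hsne.image _) hdir).mp hw
      exact ⟨A, hAs, lt_of_le_of_lt (Metric.infDist_le_dist_of_mem hwA) hwd⟩
    obtain ⟨n, hn⟩ : ∃ n, (Denumerable.eqv (ℕ × ℚ)).symm n = (k, q) :=
      ⟨Denumerable.eqv (ℕ × ℚ) (k, q), Equiv.symm_apply_apply _ _⟩
    refine ⟨n, ?_⟩
    simp only [hn]
    have hgd : g (k, q) = hex.choose := by simp only [hg, dif_pos hex]
    obtain ⟨⟨hc1, hc2⟩, hc3⟩ := hex.choose_spec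
    rw [hgd]
    refine ⟨hc2, ?_⟩
    by_contra hcon
    have hMlt : M < hex.choose := by
      rcases h.1.2 _ hc1 M hM with h1 | h2
      · exact absurd h1 hcon
      · exact lt_of_le_of_ne h2 (fun he => hcon (le_of_eq he.symm))
    have horth : (hex.chooseᗮ : Set H) ⊆ (Mᗮ : Set H) := Submodule.orthogonal_le hMlt.le
    have hmono : Metric.infDist (u k) ((Mᗮ : Submodule ℂ H) : Set H) ≤
        Metric.infDist (u k) ((hex.chooseᗮ : Submodule ℂ H) : Set H) :=
      Metric.infDist_le_infDist_of_subset horth ⟨0, Submodule.zero_mem _⟩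
    have : Metric.infDist (u k) ((Mᗮ : Submodule ℂ H) : Set H) < 2 * d / 3 :=
      lt_of_le_of_lt hmono (lt_of_lt_of_le hc3 hq2.le)
    exact absurd hukM (not_le.mpr this)

end Families

/-- Baire-category avoidance of countably many proper closed subspaces. -/
lemma exists_avoid (E : Submodule ℂ H) (hEc : IsClosed (E : Set H))
    (F : ℕ → Submodule ℂ H) (hFc : ∀ n, IsClosed (F n : Set H))
    (hF : ∀ n, ¬ E ≤ F n) :
    ∃ x, x ∈ E ∧ ∀ n, x ∉ F n := by
  haveI : CompleteSpace E := hEc.completeSpace_coe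
  haveI : BaireSpace ↥E := inferInstance
  set U : ℕ → Set ↥E := fun n => (fun y : ↥E => (y : H)) ⁻¹' ((F n : Set H))ᶜ with hU
  have hUopen : ∀ n, IsOpen (U n) :=
    fun n => ((hFc n).isOpen_compl).preimage continuous_subtype_val
  have hUdense : ∀ n, Dense (U n) := by
    intro n
    set V : Submodule ℂ ↥E := (F n).comap (E.subtype) with hV
    have hVc : IsClosed (V : Set ↥E) := (hFc n).preimage continuous_subtype_val
    have hVne : V ≠ ⊤ := by
      intro hVtop
      apply hF n
      intro y hy
      have : (⟨y, hy⟩ : ↥E) ∈ V := hVtop ▸ Submodule.mem_top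
      exact this
    have hint : interior (V : Set ↥E) = ∅ := by
      by_contra hc
      exact hVne (V.eq_top_of_nonempty_interior'
        (Set.nonempty_iff_ne_empty.mpr hc))
    have : Dense ((V : Set ↥E))ᶜ := by
      rw [← interior_eq_empty_iff_dense_compl]
      exact hint
    exact this
  have hdense : Dense (⋂ n, U n) := dense_iInter_of_isOpen hUopen hUdense
  obtain ⟨y, hy⟩ := hdense.nonempty
  refine ⟨(y : H), y.2, ?_⟩
  intro n hyF
  have : y ∈ U n := Set.mem_iInter.mp hy n
  exact this hyF

theorem stmt_14 (𝓛 : Set (Submodule ℂ H)) (h𝓛 : IsContinuousNest 𝓛)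
    (T : H →L[ℂ] H) (hfin : FiniteDimensional ℂ (LinearMap.range (T : H →ₗ[ℂ] H)))
    (M₀ P : Submodule ℂ H) (hM₀ : M₀ ∈ 𝓛) (hP : P ∈ 𝓛)
    (hlt : phiT 𝓛 T M₀ < P)
    (hmin : ∀ M ∈ 𝓛, phiT 𝓛 T M₀ < phiT 𝓛 T M → P ≤ phiT 𝓛 T M) :
    ∃ x : H, Mhat 𝓛 x = phiT 𝓛 T M₀ ∧ Mx 𝓛 x = P ∧
      Mx 𝓛 (T x) = sigmaT 𝓛 T (PsiT 𝓛 T M₀) := by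
  classical
  obtain ⟨hnest, hcont⟩ := h𝓛
  have hclosed : ∀ M ∈ 𝓛, IsClosed (M : Set H) := hnest.1.1
  have hbot : (⊥ : Submodule ℂ H) ∈ 𝓛 := hnest.1.2.1
  have htop : (⊤ : Submodule ℂ H) ∈ 𝓛 := hnest.1.2.2.1
  have htotal := hnest.2
  have hlt' : ∀ A ∈ 𝓛, ∀ B ∈ 𝓛, ¬ A ≤ B → B < A := by
    intro A hA B hB hnle
    rcases htotal A hA B hB with h1 | h2
    · exact absurd h1 hnle
    · exact lt_of_le_of_ne h2 (fun he => hnle (le_of_eq he.symm))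
  set N := phiT 𝓛 T M₀ with hN
  have hNmem : N ∈ 𝓛 := phiT_mem 𝓛 T hnest M₀
  have hNc : IsClosed (N : Set H) := hclosed N hNmem
  haveI : CompleteSpace N := hNc.completeSpace_coe
  have hNtop : N ≠ ⊤ := (lt_of_lt_of_le hlt le_top).ne
  set Lev := {M' ∈ 𝓛 | phiT 𝓛 T M' = N} with hLev
  set σ := (sSup Lev).topologicalClosure with hσ
  have hσmem : σ ∈ 𝓛 := hnest.1.2.2.2.2 _ (fun _ h => h.1)
  have hσc : IsClosed (σ : Set H) := hclosed σ hσmem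
  have hM₀Lev : M₀ ∈ Lev := ⟨hM₀, rfl⟩
  have hM₀σ : M₀ ≤ σ := le_trans (le_sSup hM₀Lev) (Submodule.le_topologicalClosure _)
  -- Key fact: P ≤ φ_T(σ)
  have hPφσ : P ≤ phiT 𝓛 T σ := by
    have hNφσ : N ≤ phiT 𝓛 T σ := hN ▸ phiT_mono 𝓛 T hM₀σ
    rcases eq_or_lt_of_le hNφσ with heq | hltσ
    · exfalso
      have hσtop : σ ≠ ⊤ := by
        intro he
        have h1 : (⊤ : Submodule ℂ H) ≤ phiT 𝓛 T σ :=
          le_phiT 𝓛 T hnest htop (fun v _ => by rw [he]; trivial)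
        have h2 : N = ⊤ := by
          have := heq ▸ le_antisymm le_top h1
          exact le_antisymm le_top (this ▸ le_rfl)
        exact hNtop h2
      have hTP : ∀ v ∈ P, T v ∈ sInf {M ∈ 𝓛 | σ < M} := by
        intro v hv
        rw [Submodule.mem_sInf]
        intro M hMσ
        have hMmem := hMσ.1
        have hσM := hMσ.2
        have h1 : phiT 𝓛 T σ ≤ phiT 𝓛 T M := phiT_mono 𝓛 T hσM.le
        have h1' : N ≤ phiT 𝓛 T M := heq.le.trans h1
        have h2 : N ≠ phiT 𝓛 T M := by
          intro he2
          have hMLev : M ∈ Lev := ⟨hMmem, he2.symm⟩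
          have : M ≤ σ := le_trans (le_sSup hMLev) (Submodule.le_topologicalClosure _)
          exact hσM.not_ge this
        have h3 : N < phiT 𝓛 T M := lt_of_le_of_ne h1' h2
        have h4 : P ≤ phiT 𝓛 T M := hmin M hMmem (hN ▸ h3)
        exact phiT_maps 𝓛 T hnest (hclosed M hMmem) v (h4 hv)
      rw [inf_gt_eq 𝓛 ⟨hnest, hcont⟩ hσmem hσtop] at hTP
      have hPN : P ≤ phiT 𝓛 T σ := le_phiT 𝓛 T hnest hP hTP
      rw [← heq] at hPN
      exact hlt.not_ge hPN
    · exact hmin σ hσmem (hN ▸ hltσ)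
  have hTPσ : ∀ v ∈ P, T v ∈ σ :=
    fun v hv => phiT_maps 𝓛 T hnest hσc v (hPφσ hv)
  -- The space E
  set E := P ⊓ Nᗮ with hE
  have hEcoe : (E : Set H) = (P : Set H) ∩ (Nᗮ : Set H) := by
    rw [hE, Submodule.coe_inf]
  have hEc : IsClosed (E : Set H) := by
    rw [hEcoe]; exact (hclosed P hP).inter (Submodule.isClosed_orthogonal N)
  have hEP : E ≤ P := inf_le_left
  have hENo : E ≤ Nᗮ := inf_le_right
  -- decomposition of elements of P
  have hNP : N ≤ P := hlt.le
  have hdecomp : ∀ v ∈ P, ∃ a b, a ∈ N ∧ b ∈ E ∧ v = a + b := by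
    intro v hv
    refine ⟨(N.orthogonalProjectionOnto v : H), v - (N.orthogonalProjectionOnto v : H), ?_, ?_, ?_⟩
    · exact (N.orthogonalProjectionOnto v).2
    · refine Submodule.mem_inf.mpr ⟨?_, ?_⟩
      · exact P.sub_mem hv (hNP (N.orthogonalProjectionOnto v).2)
      · exact Submodule.sub_starProjection_mem_orthogonal (K := N) v
    · abel
  have hEbot : ¬ E ≤ (⊥ : Submodule ℂ H) := by
    intro hle
    obtain ⟨v, hvP, hvN⟩ := SetLike.exists_of_lt hlt
    obtain ⟨a, b, ha, hb, hvab⟩ := hdecomp v hvP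
    have hb0 : b = 0 := by simpa using hle hb
    exact hvN (by rw [hvab, hb0, add_zero]; exact ha)
  -- Fact 3 : T(E) is not contained in any C < σ
  have hfact3 : ∀ C ∈ 𝓛, C < σ → ∃ e ∈ E, T e ∉ C := by
    intro C hC hCσ
    by_contra hc
    push_neg at hc
    have hecl : ∃ M' ∈ Lev, ¬ M' ≤ C := by
      by_contra hall
      push_neg at hall
      have h1 : sSup Lev ≤ C := sSup_le hall
      have h2 : σ ≤ C := Submodule.topologicalClosure_minimal _ h1 (hclosed C hC)
      exact hCσ.not_ge h2
    obtain ⟨M', hM'Lev, hM'C⟩ := hecl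
    have hCM' : C ≤ M' := by
      rcases htotal C hC M' hM'Lev.1 with h1 | h2
      · exact h1
      · exact absurd h2 hM'C
    have hTP' : ∀ v ∈ P, T v ∈ M' := by
      intro v hv
      obtain ⟨a, b, ha, hb, rfl⟩ := hdecomp v hv
      have hTa : T a ∈ M' := by
        have haφ : a ∈ phiT 𝓛 T M' := by rw [hM'Lev.2]; exact ha
        exact phiT_maps 𝓛 T hnest (hclosed M' hM'Lev.1) a haφ
      have hTb : T b ∈ M' := hCM' (hc b hb)
      rw [map_add]
      exact M'.add_mem hTa hTb
    have h5 : P ≤ phiT 𝓛 T M' := le_phiT 𝓛 T hnest hP hTP'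
    rw [hM'Lev.2] at h5
    exact hlt.not_ge h5
  -- countable families
  obtain ⟨B, hBmem, hBprop⟩ := cofinal_family 𝓛 ⟨hnest, hcont⟩ hP
  obtain ⟨C, hCmem, hCprop⟩ := cofinal_family 𝓛 ⟨hnest, hcont⟩ hσmem
  obtain ⟨A, hAmem, hAprop⟩ := coinitial_family 𝓛 ⟨hnest, hcont⟩ hNmem hNtop
  -- avoidance subspaces
  set FB : ℕ → Submodule ℂ H := fun n =>
    if h : B n ⊔ N < P then (B n ⊔ N) ⊓ E else ⊥ with hFB
  set FA : ℕ → Submodule ℂ H := fun n =>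
    if h : N < A n then (A n ⊓ P)ᗮ ⊓ E else ⊥ with hFA
  set FC : ℕ → Submodule ℂ H := fun n =>
    if h : C n < σ then ((C n).comap (T : H →ₗ[ℂ] H)) ⊓ E else ⊥ with hFC
  have hsupmem : ∀ n, B n ⊔ N ∈ 𝓛 := by
    intro n
    rcases htotal (B n) (hBmem n) N hNmem with h1 | h2
    · rw [sup_eq_right.mpr h1]; exact hNmem
    · rw [sup_eq_left.mpr h2]; exact hBmem n
  have hbotclosed : IsClosed ((⊥ : Submodule ℂ H) : Set H) := by
    rw [Submodule.bot_coe]; exact isClosed_singleton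
  have hFBc : ∀ n, IsClosed (FB n : Set H) := by
    intro n
    simp only [hFB]
    by_cases h : B n ⊔ N < P
    · rw [dif_pos h, Submodule.coe_inf]
      exact (hclosed _ (hsupmem n)).inter hEc
    · rw [dif_neg h]; exact hbotclosed
  have hFAc : ∀ n, IsClosed (FA n : Set H) := by
    intro n
    simp only [hFA]
    by_cases h : N < A n
    · rw [dif_pos h, Submodule.coe_inf]
      exact (Submodule.isClosed_orthogonal _).inter hEc
    · rw [dif_neg h]; exact hbotclosed
  have hFCc : ∀ n, IsClosed (FC n : Set H) := by
    intro n
    simp only [hFC]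
    by_cases h : C n < σ
    · rw [dif_pos h, Submodule.coe_inf]
      exact ((hclosed _ (hCmem n)).preimage T.continuous).inter hEc
    · rw [dif_neg h]; exact hbotclosed
  have hFBprop : ∀ n, ¬ E ≤ FB n := by
    intro n
    simp only [hFB]
    by_cases h : B n ⊔ N < P
    · rw [dif_pos h]
      intro hle
      have hEB : E ≤ B n ⊔ N := fun y hy => (Submodule.mem_inf.mp (hle hy)).1
      have hPB : P ≤ B n ⊔ N := by
        intro v hv
        obtain ⟨a, b, ha, hb, rfl⟩ := hdecomp v hv
        exact (B n ⊔ N).add_mem ((le_sup_right : N ≤ B n ⊔ N) ha) (hEB hb)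
      exact h.not_ge hPB
    · rw [dif_neg h]; exact hEbot
  have hFAprop : ∀ n, ¬ E ≤ FA n := by
    intro n
    simp only [hFA]
    by_cases h : N < A n
    · rw [dif_pos h]
      intro hle
      have hNA' : N < A n ⊓ P := by
        rcases htotal (A n) (hAmem n) P hP with h1 | h2
        · rw [inf_eq_left.mpr h1]; exact h
        · rw [inf_eq_right.mpr h2]; exact hlt
      obtain ⟨w, hwA, hwN⟩ := SetLike.exists_of_lt hNA'
      set b := w - (N.orthogonalProjectionOnto w : H) with hb
      have hbNo : b ∈ Nᗮ := Submodule.sub_starProjection_mem_orthogonal (K := N) w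
      have haN : (N.orthogonalProjectionOnto w : H) ∈ N := (N.orthogonalProjectionOnto w).2
      have hbA : b ∈ A n ⊓ P := by
        apply Submodule.sub_mem _ hwA
        exact hNA'.le haN
      have hbP : b ∈ P := (Submodule.mem_inf.mp hbA).2
      have hbE : b ∈ E := Submodule.mem_inf.mpr ⟨hbP, hbNo⟩
      have hbO : b ∈ (A n ⊓ P)ᗮ := (Submodule.mem_inf.mp (hle hbE)).1
      have hb0 : b = 0 := by
        have := (Submodule.mem_orthogonal _ b).mp hbO b hbA
        exact inner_self_eq_zero.mp this
      apply hwN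
      have : w = (N.orthogonalProjectionOnto w : H) := by
        rw [← sub_eq_zero]; exact hb0
      rw [this]; exact haN
    · rw [dif_neg h]; exact hEbot
  have hFCprop : ∀ n, ¬ E ≤ FC n := by
    intro n
    simp only [hFC]
    by_cases h : C n < σ
    · rw [dif_pos h]
      intro hle
      obtain ⟨e, heE, heT⟩ := hfact3 (C n) (hCmem n) h
      exact heT ((Submodule.mem_inf.mp (hle heE)).1)
    · rw [dif_neg h]; exact hEbot
  -- combine the families
  set F : ℕ → Submodule ℂ H := fun n =>
    if n % 3 = 0 then FB (n / 3) else if n % 3 = 1 then FA (n / 3) else FC (n / 3) with hF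
  have hFc : ∀ n, IsClosed (F n : Set H) := by
    intro n
    simp only [hF]
    by_cases h0 : n % 3 = 0
    · rw [if_pos h0]; exact hFBc _
    · rw [if_neg h0]
      by_cases h1 : n % 3 = 1
      · rw [if_pos h1]; exact hFAc _
      · rw [if_neg h1]; exact hFCc _
  have hFprop : ∀ n, ¬ E ≤ F n := by
    intro n
    simp only [hF]
    by_cases h0 : n % 3 = 0
    · rw [if_pos h0]; exact hFBprop _
    · rw [if_neg h0]
      by_cases h1 : n % 3 = 1
      · rw [if_pos h1]; exact hFAprop _
      · rw [if_neg h1]; exact hFCprop _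
  obtain ⟨x, hxE, hxF⟩ := exists_avoid E hEc F hFc hFprop
  have hxFB : ∀ k, x ∉ FB k := by
    intro k
    have := hxF (3 * k)
    simp only [hF] at this
    have e1 : (3 * k) % 3 = 0 := by omega
    have e2 : (3 * k) / 3 = k := by omega
    rwa [if_pos e1, e2] at this
  have hxFA : ∀ k, x ∉ FA k := by
    intro k
    have := hxF (3 * k + 1)
    simp only [hF] at this
    have e1 : (3 * k + 1) % 3 = 1 := by omega
    have e0 : ¬ (3 * k + 1) % 3 = 0 := by omega
    have e2 : (3 * k + 1) / 3 = k := by omega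
    rwa [if_neg e0, if_pos e1, e2] at this
  have hxFC : ∀ k, x ∉ FC k := by
    intro k
    have := hxF (3 * k + 2)
    simp only [hF] at this
    have e0 : ¬ (3 * k + 2) % 3 = 0 := by omega
    have e1 : ¬ (3 * k + 2) % 3 = 1 := by omega
    have e2 : (3 * k + 2) / 3 = k := by omega
    rwa [if_neg e0, if_neg e1, e2] at this
  have hxP : x ∈ P := hEP hxE
  have hxNo : x ∈ Nᗮ := hENo hxE
  refine ⟨x, ?_, ?_, ?_⟩
  -- 1 : Mhat x = N
  · apply le_antisymm
    · apply Submodule.topologicalClosure_minimal _ _ hNc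
      apply sSup_le
      intro M hM
      by_contra hMN
      have hNM : N < M := hlt' M hM.1 N hNmem hMN
      obtain ⟨n, hn1, hn2⟩ := hAprop M hM.1 hNM
      apply hxFA n
      simp only [hFA]; rw [dif_pos hn1]
      refine Submodule.mem_inf.mpr ⟨?_, hxE⟩
      rw [Submodule.mem_orthogonal]
      intro u hu
      have huM : u ∈ M := hn2 (Submodule.mem_inf.mp hu).1
      have := hM.2 u huM
      rwa [inner_eq_zero_symm] at this
    · refine le_trans (le_sSup ?_) (Submodule.le_topologicalClosure _)
      refine ⟨hNmem, ?_⟩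
      intro v hv
      rw [inner_eq_zero_symm]
      exact (Submodule.mem_orthogonal _ x).mp hxNo v hv
  -- 2 : Mx x = P
  · apply le_antisymm
    · exact sInf_le ⟨hP, hxP⟩
    · apply le_sInf
      intro M hM
      by_contra hPM
      have hMP : M < P := hlt' P hP M hM.1 hPM
      obtain ⟨n, hn1, hn2⟩ := hBprop M hM.1 hMP
      apply hxFB n
      have hsup : B n ⊔ N < P := by
        rcases htotal (B n) (hBmem n) N hNmem with h1 | h2
        · rw [sup_eq_right.mpr h1]; exact hlt
        · rw [sup_eq_left.mpr h2]; exact hn2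
      simp only [hFB]; rw [dif_pos hsup]
      exact Submodule.mem_inf.mpr ⟨(le_sup_left : B n ≤ B n ⊔ N) (hn1 hM.2), hxE⟩
  -- 3 : Mx (T x) = σ
  · have hPsi : phiT 𝓛 T (PsiT 𝓛 T M₀) = N := by
      apply le_antisymm
      · have h1 : PsiT 𝓛 T M₀ ≤ M₀ := sInf_le ⟨hM₀, rfl⟩
        exact hN ▸ phiT_mono 𝓛 T h1
      · apply le_phiT 𝓛 T hnest hNmem
        intro v hv
        rw [PsiT, Submodule.mem_sInf]
        intro M' hM'
        have hvφ : v ∈ phiT 𝓛 T M' := by rw [hM'.2, ← hN]; exact hv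
        exact phiT_maps 𝓛 T hnest (hclosed M' hM'.1) v hvφ
    have hsig : sigmaT 𝓛 T (PsiT 𝓛 T M₀) = σ := by
      rw [sigmaT, hσ, hLev, hPsi]
    rw [hsig]
    apply le_antisymm
    · exact sInf_le ⟨hσmem, hTPσ x hxP⟩
    · apply le_sInf
      intro M hM
      by_contra hσMle
      have hMσ : M < σ := hlt' σ hσmem M hM.1 hσMle
      obtain ⟨n, hn1, hn2⟩ := hCprop M hM.1 hMσ
      apply hxFC n
      simp only [hFC]; rw [dif_pos hn2]
      refine Submodule.mem_inf.mpr ⟨?_, hxE⟩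
      exact hn1 hM.2
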